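/- Representation formula: the unique fixed point u_λ of g ↦ T_λ(g) + β satisfies u_λ(x) = min over backward sequences (x_{-n})_{n≥0} with x_0 = x of Σ_{n=0}^∞ λⁿ (c(x_{-n-1}, x_{-n}) + β), and the minimum is attained. -/

import Mathlib

/-- Representation formula for the solution of the discounted equation:
the value `u_λ x` is the minimum over backward sequences starting at `x` of the
discounted total cost, and the minimum is attained. -/
theorem discounted_representation_formula
    {M : Type*} [MetricSpace M] [CompactSpace M] [Nonempty M]
    (c : M × M → ℝ) (hc : Continuous c)
    (lam : ℝ) (hlam0 : 0 < lam) (hlam1 : lam < 1) (β : ℝ)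
    (u : C(M, ℝ))
    (hu : ∀ x : M, u x = (⨅ y : M, (lam * u y + c (y, x))) + β)
    (x : M) :
    ∃ p : ℕ → M, p 0 = x ∧
      u x = ∑' n : ℕ, lam ^ n * (c (p (n + 1), p n) + β) ∧
      ∀ q : ℕ → M, q 0 = x →
        u x ≤ ∑' n : ℕ, lam ^ n * (c (q (n + 1), q n) + β) := by
  -- boundedness of u and c
  obtain ⟨Cu, hCu⟩ : ∃ C, ∀ z : M, |u z| ≤ C := by
    obtain ⟨z0, -, hz0⟩ := isCompact_univ.exists_isMaxOn Set.univ_nonempty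
      ((continuous_abs.comp u.continuous).continuousOn)
    exact ⟨|u z0|, fun z => hz0 (Set.mem_univ z)⟩
  obtain ⟨Cc, hCc⟩ : ∃ C, ∀ z : M × M, |c z| ≤ C := by
    obtain ⟨z0, -, hz0⟩ := isCompact_univ.exists_isMaxOn Set.univ_nonempty
      ((continuous_abs.comp hc).continuousOn)
    exact ⟨|c z0|, fun z => hz0 (Set.mem_univ z)⟩
  -- minimizer selection
  have hmin : ∀ z : M, ∃ y : M, ∀ w : M,
      lam * u y + c (y, z) ≤ lam * u w + c (w, z) := by
    intro z
    obtain ⟨y, -, hy⟩ := isCompact_univ.exists_isMinOn Set.univ_nonempty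
      (Continuous.continuousOn (f := fun w => lam * u w + c (w, z)) (by fun_prop))
    exact ⟨y, fun w => hy (Set.mem_univ w)⟩
  set Y : M → M := fun z => (hmin z).choose with hY
  have hYspec : ∀ z w, lam * u (Y z) + c (Y z, z) ≤ lam * u w + c (w, z) :=
    fun z => (hmin z).choose_spec
  have hbdd : ∀ z : M, BddBelow (Set.range fun y => lam * u y + c (y, z)) := by
    intro z
    exact ⟨lam * u (Y z) + c (Y z, z), by rintro b ⟨w, rfl⟩; exact hYspec z w⟩
  have hInf : ∀ z : M, (⨅ y : M, lam * u y + c (y, z)) = lam * u (Y z) + c (Y z, z) := by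
    intro z
    exact le_antisymm (ciInf_le (hbdd z) (Y z)) (le_ciInf (hYspec z))
  have hstep : ∀ z : M, u z = lam * u (Y z) + (c (Y z, z) + β) := by
    intro z; rw [hu z, hInf z]; ring
  have hineq : ∀ z w : M, u z ≤ lam * u w + (c (w, z) + β) := by
    intro z w
    have h := ciInf_le (hbdd z) w
    rw [hu z]; linarith
  -- define the optimal sequence
  let p : ℕ → M := fun n => Nat.rec x (fun _ prev => Y prev) n
  have hp0 : p 0 = x := rfl
  have hpsucc : ∀ n, p (n + 1) = Y (p n) := fun n => rfl
  -- summability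
  have hsummable : ∀ q : ℕ → M, Summable (fun n => lam ^ n * (c (q (n + 1), q n) + β)) := by
    intro q
    apply Summable.of_abs
    apply Summable.of_nonneg_of_le (fun n => abs_nonneg _) (fun n => ?_)
      ((summable_geometric_of_lt_one hlam0.le hlam1).mul_right (Cc + |β|))
    rw [abs_mul, abs_pow, abs_of_pos hlam0]
    exact mul_le_mul_of_nonneg_left
      ((abs_add_le _ _).trans (add_le_add_left (hCc _) _)) (pow_nonneg hlam0.le n)
  -- tail tends to zero
  have htail : ∀ q : ℕ → M,
      Filter.Tendsto (fun N => lam ^ N * u (q N)) Filter.atTop (nhds 0) := by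
    intro q
    have hb : ∀ N : ℕ, ‖lam ^ N * u (q N)‖ ≤ lam ^ N * Cu := by
      intro N
      rw [Real.norm_eq_abs, abs_mul, abs_pow, abs_of_pos hlam0]
      exact mul_le_mul_of_nonneg_left (hCu _) (pow_nonneg hlam0.le N)
    have ht : Filter.Tendsto (fun N : ℕ => lam ^ N * Cu) Filter.atTop (nhds (0 * Cu)) :=
      (tendsto_pow_atTop_nhds_zero_of_lt_one hlam0.le hlam1).mul_const Cu
    exact squeeze_zero_norm hb (by simpa using ht)
  -- telescoping identity for p
  have hpart : ∀ N, u x =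
      (∑ n ∈ Finset.range N, lam ^ n * (c (p (n + 1), p n) + β)) + lam ^ N * u (p N) := by
    intro N
    induction N with
    | zero => simp [hp0]
    | succ N ih =>
      have h := hstep (p N)
      rw [← hpsucc N] at h
      rw [Finset.sum_range_succ, ih, h]; ring
  -- telescoping inequality for any q
  have hqpart : ∀ (q : ℕ → M), q 0 = x → ∀ N, u x ≤
      (∑ n ∈ Finset.range N, lam ^ n * (c (q (n + 1), q n) + β)) + lam ^ N * u (q N) := by
    intro q hq0 N
    induction N with
    | zero => simp [hq0]
    | succ N ih =>
      have h1 := hineq (q N) (q (N + 1))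
      have h2 : lam ^ N * u (q N)
          ≤ lam ^ N * (lam * u (q (N + 1)) + (c (q (N + 1), q N) + β)) :=
        mul_le_mul_of_nonneg_left h1 (pow_nonneg hlam0.le N)
      rw [Finset.sum_range_succ]
      calc u x ≤ (∑ n ∈ Finset.range N, lam ^ n * (c (q (n + 1), q n) + β))
            + lam ^ N * u (q N) := ih
        _ ≤ (∑ n ∈ Finset.range N, lam ^ n * (c (q (n + 1), q n) + β))
            + lam ^ N * (lam * u (q (N + 1)) + (c (q (N + 1), q N) + β)) := by linarith
        _ = (∑ n ∈ Finset.range N, lam ^ n * (c (q (n + 1), q n) + β))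
            + lam ^ N * (c (q (N + 1), q N) + β) + lam ^ (N + 1) * u (q (N + 1)) := by ring
  refine ⟨p, hp0, ?_, ?_⟩
  · -- equality for p
    have hps := (hsummable p).hasSum.tendsto_sum_nat
    have h2 := hps.add (htail p)
    rw [add_zero] at h2
    have h3 : (fun N => (∑ n ∈ Finset.range N, lam ^ n * (c (p (n + 1), p n) + β))
        + lam ^ N * u (p N)) = fun _ => u x := funext fun N => (hpart N).symm
    rw [h3] at h2
    exact tendsto_nhds_unique tendsto_const_nhds h2
  · -- inequality for arbitrary q
    intro q hq0
    have hps := (hsummable q).hasSum.tendsto_sum_nat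
    have h2 := hps.add (htail q)
    rw [add_zero] at h2
    exact ge_of_tendsto h2 (Filter.Eventually.of_forall (hqpart q hq0))
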